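/- Let R ≤ O(1) and let {ζ_1ζ_1ᵀ,…,ζ_nζ_nᵀ} be an (ε, δ, r, 𝒮_R, 𝒫_R)-stable set with respect to Id_d and 2·Id_{d²}, for some ε ≤ δ and r ≤ O(1). Then for every matrix A ∈ ℝ^{d×d} with ‖A‖² ≤ R, the set {(Aζ_1)(Aζ_1)ᵀ,…,(Aζ_n)(Aζ_n)ᵀ} is (ε, δ', r', 𝒮_1, 𝒫_1)-stable with respect to M = AAᵀ and Q = 2·Id_{d²}, where r' ≤ O(1) and δ' = O(δ + √(ε·‖AAᵀ − Id_d‖)). -/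

import Mathlib

open MeasureTheory ProbabilityTheory Matrix Finset Real Filter

noncomputable section

namespace Paper

variable {d n : ℕ}

/-- Spectral (operator) norm of a matrix. -/
def specNorm (A : Matrix (Fin d) (Fin d) ℝ) : ℝ :=
  ‖LinearMap.toContinuousLinearMap (Matrix.toEuclideanLin A)‖

/-- Frobenius norm of a matrix. -/
def frobNorm (A : Matrix (Fin d) (Fin d) ℝ) : ℝ :=
  Real.sqrt (∑ i, ∑ j, (A i j) ^ 2)

/-- Effective rank. -/
def erk (A : Matrix (Fin d) (Fin d) ℝ) : ℝ := A.trace / specNorm A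

open Classical in
/-- Positive semidefinite square root (junk value `0` if not psd). -/
def matSqrt (A : Matrix (Fin d) (Fin d) ℝ) : Matrix (Fin d) (Fin d) ℝ :=
  if h : A.PosSemidef then
    (h.1.eigenvectorUnitary : Matrix (Fin d) (Fin d) ℝ) *
      Matrix.diagonal ((↑) ∘ (fun x : ℝ => √x) ∘ h.1.eigenvalues) *
      (star h.1.eigenvectorUnitary : Matrix (Fin d) (Fin d) ℝ)
  else 0

/-- Inverse of the positive semidefinite square root. -/
def invSqrt (A : Matrix (Fin d) (Fin d) ℝ) : Matrix (Fin d) (Fin d) ℝ := (matSqrt A)⁻¹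

/-- Standard Gaussian measure on ℝ^d. -/
def stdGaussian (d : ℕ) : Measure (Fin d → ℝ) :=
  Measure.pi fun _ => gaussianReal 0 1

/-- Centered Gaussian measure with covariance S. -/
def gaussianOf (S : Matrix (Fin d) (Fin d) ℝ) : Measure (Fin d → ℝ) :=
  (stdGaussian d).map (matSqrt S).mulVec

/-- Spatial sign (projection on the sphere of radius √d). -/
def spSign (d : ℕ) (x : Fin d → ℝ) : Fin d → ℝ :=
  fun i => Real.sqrt d * x i / Real.sqrt (∑ j, (x j) ^ 2)

/-- Truncated spatial sign with threshold Δ. -/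
def truncSign (d : ℕ) (Δ : ℝ) (x : Fin d → ℝ) : Fin d → ℝ :=
  if (∑ i, (x i) ^ 2) < (d : ℝ) - Δ then fun i => Real.sqrt ((d : ℝ) / ((d : ℝ) - Δ)) * x i
  else if (d : ℝ) + Δ < (∑ i, (x i) ^ 2) then fun i => Real.sqrt ((d : ℝ) / ((d : ℝ) + Δ)) * x i
  else spSign d x

/-- Mean vector of a measure on ℝ^d. -/
def meanVec (μ : Measure (Fin d → ℝ)) : Fin d → ℝ := fun i => ∫ x, x i ∂μ

/-- Covariance matrix of a measure on ℝ^d. -/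
def covMatrix (μ : Measure (Fin d → ℝ)) : Matrix (Fin d) (Fin d) ℝ :=
  Matrix.of fun i j => ∫ x, (x i - meanVec μ i) * (x j - meanVec μ j) ∂μ

/-- Inner product of vectors indexed by `ι`. -/
def inner1 {ι : Type*} [Fintype ι] (v x : ι → ℝ) : ℝ := ∑ j, v j * x j

/-- Inner product of "matrices" indexed by `ι × ι`. -/
def innerM {ι : Type*} [Fintype ι] (P Q : ι → ι → ℝ) : ℝ := ∑ j, ∑ k, P j k * Q j k

/-- Outer product. -/
def outer {ι : Type*} (x y : ι → ℝ) : ι → ι → ℝ := fun j k => x j * y k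

/-- sup_{v ∈ V} ⟨v, a⟩². -/
def supInner {ι : Type*} [Fintype ι] (V : Set (ι → ℝ)) (a : ι → ℝ) : ℝ :=
  sSup ((fun v => (inner1 v a) ^ 2) '' V)

/-- Generalized stability (Definition 4 of the paper). -/
def IsStable {ι : Type*} [Fintype ι] (x : Fin n → ι → ℝ) (ε δ r : ℝ)
    (V : Set (ι → ℝ)) (P : Set (ι → ι → ℝ)) (μ : ι → ℝ) (Q : ι → ι → ℝ) : Prop :=
  ∀ v ∈ V, ∀ p ∈ P, ∀ M : Finset (Fin n), (1 - ε) * (n : ℝ) ≤ (M.card : ℝ) →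
    |(M.card : ℝ)⁻¹ * ∑ i ∈ M, inner1 v (fun j => x i j - μ j)| ≤ δ ∧
    |(M.card : ℝ)⁻¹ * ∑ i ∈ M, innerM p (outer (fun j => x i j - μ j) (fun j => x i j - μ j))
        - innerM p Q| ≤ δ ^ 2 / ε ∧
    |innerM p Q| ≤ r ^ 2

/-- 𝒱 ⊗ 𝒱 ⊆ 𝒫. -/
def TensorSub {ι : Type*} (V : Set (ι → ℝ)) (P : Set (ι → ι → ℝ)) : Prop :=
  ∀ v ∈ V, ∀ v' ∈ V, outer v v' ∈ P

/-- Adequacy of 𝒫 with respect to 𝒱. -/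
def Adequate {ι : Type*} [Fintype ι] (V : Set (ι → ℝ)) (P : Set (ι → ι → ℝ)) : Prop :=
  (∀ a : ι → ℝ, ∀ p ∈ P, 0 ≤ innerM p (outer a a)) ∧
  (∀ a b : ι → ℝ, ∀ p ∈ P, (innerM p (outer a b)) ^ 2 ≤ supInner V a * supInner V b)

/-- The weight set 𝒲_ε. -/
def weightSet (n : ℕ) (ε : ℝ) : Set (Fin n → ℝ) :=
  {w | (∀ i, 0 ≤ w i ∧ w i ≤ 1 / (n : ℝ)) ∧ 1 - ε ≤ ∑ i, w i}

/-- Weighted mean μ_w. -/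
def wMean {ι : Type*} (w : Fin n → ℝ) (x : Fin n → ι → ℝ) : ι → ℝ :=
  fun j => (∑ i, w i)⁻¹ * ∑ i, w i * x i j

/-- Weighted covariance Σ_w. -/
def wCov {ι : Type*} (w : Fin n → ℝ) (x : Fin n → ι → ℝ) : ι → ι → ℝ :=
  fun j k => (∑ i, w i)⁻¹ * ∑ i, w i * (x i j - wMean w x j) * (x i k - wMean w x k)

/-- A d×d matrix viewed as a vector in ℝ^{d²}. -/
def mvec (A : Matrix (Fin d) (Fin d) ℝ) : Fin d × Fin d → ℝ := fun p => A p.1 p.2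

/-- Id_d as a vector in ℝ^{d²}. -/
def idVec (d : ℕ) : Fin d × Fin d → ℝ := fun p => if p.1 = p.2 then 1 else 0

/-- 2·Id_{d²}. -/
def twoId (d : ℕ) : (Fin d × Fin d) → (Fin d × Fin d) → ℝ :=
  fun p q => if p = q then 2 else 0

/-- The Frobenius-norm ball ℬ_R (as vectors in ℝ^{d²}). -/
def ballF (d : ℕ) (R : ℝ) : Set (Fin d × Fin d → ℝ) :=
  {V | ∑ p : Fin d × Fin d, (V p) ^ 2 ≤ R ^ 2}

/-- ℬ_R ⊗ ℬ_R. -/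
def ballFT (d : ℕ) (R : ℝ) : Set ((Fin d × Fin d) → (Fin d × Fin d) → ℝ) :=
  {P | ∃ V ∈ ballF d R, ∃ W ∈ ballF d R, P = outer V W}

/-- 𝒮_R = {uuᵀ : ‖u‖ ≤ √R}. -/
def sphereSet (d : ℕ) (R : ℝ) : Set (Fin d × Fin d → ℝ) :=
  {V | ∃ u : Fin d → ℝ, (∑ i, (u i) ^ 2) ≤ R ∧ V = fun p => u p.1 * u p.2}

/-- 𝒫_R: the set of degree-4 pseudo-expectation moment matrices Ẽ[v^{⊗4}]
under the constraint ‖v‖² ≤ R. -/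
def pseudoSet (d : ℕ) (R : ℝ) : Set ((Fin d × Fin d) → (Fin d × Fin d) → ℝ) :=
  {P | ∃ L : MvPolynomial (Fin d) ℝ →ₗ[ℝ] ℝ,
    L 1 = 1 ∧
    (∀ q : MvPolynomial (Fin d) ℝ, q.totalDegree ≤ 2 → 0 ≤ L (q ^ 2)) ∧
    (∀ q : MvPolynomial (Fin d) ℝ, q.totalDegree ≤ 1 →
      0 ≤ L ((MvPolynomial.C R - ∑ i, MvPolynomial.X i ^ 2) * q ^ 2)) ∧
    P = fun p q => L (MvPolynomial.X p.1 * MvPolynomial.X p.2 *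
        MvPolynomial.X q.1 * MvPolynomial.X q.2)}

/-- The Hanson–Wright property of a distribution ρ with mean μv and covariance S. -/
def HansonWright (ρ : Measure (Fin d → ℝ)) (μv : Fin d → ℝ)
    (S : Matrix (Fin d) (Fin d) ℝ) (CHW : ℝ) : Prop :=
  ∀ A : Matrix (Fin d) (Fin d) ℝ, ∀ t : ℝ, 0 < t →
    ρ {x | t ≤ |(∑ j, ∑ k, ((invSqrt S).mulVec (fun l => x l - μv l)) j * A j k *
        ((invSqrt S).mulVec (fun l => x l - μv l)) k) - A.trace|}
      ≤ ENNReal.ofReal (2 * Real.exp (-(1 / CHW) *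
          min (t ^ 2 / (frobNorm A) ^ 2) (t / specNorm A)))

/-- ε-corruption of an indexed family of points. -/
def Corruption {α : Type*} (n : ℕ) (ε : ℝ) (x y : Fin n → α) : Prop :=
  ∃ G : Finset (Fin n), (1 - ε) * (n : ℝ) ≤ (G.card : ℝ) ∧ ∀ i ∈ G, x i = y i

/-- Entries of the 4-tensor E[(xxᵀ − Id)^{⊗2}] of a measure μ on ℝ^d. -/
def tensorEnt (μ : Measure (Fin d → ℝ)) (i1 i2 i3 i4 : Fin d) : ℝ :=
  ∫ x, (x i1 * x i2 - if i1 = i2 then (1 : ℝ) else 0) *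
       (x i3 * x i4 - if i3 = i4 then (1 : ℝ) else 0) ∂μ

/-- E[(xxᵀ − Id)^{⊗2}] as a d²×d² matrix. -/
def tensorQ (μ : Measure (Fin d → ℝ)) : (Fin d × Fin d) → (Fin d × Fin d) → ℝ :=
  fun p q => tensorEnt μ p.1 p.2 q.1 q.2


lemma entry_toEuclideanLin (A : Matrix (Fin d) (Fin d) ℝ) (v : Fin d → ℝ) (i : Fin d) :
    (Matrix.toEuclideanLin A ((WithLp.equiv 2 (Fin d → ℝ)).symm v)) i = A.mulVec v i := by
  simp [Matrix.toEuclideanLin_apply]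

lemma mulVec_sq_sum_le (A : Matrix (Fin d) (Fin d) ℝ) (v : Fin d → ℝ) :
    ∑ i, (A.mulVec v i)^2 ≤ specNorm A^2 * ∑ i, (v i)^2 := by
  classical
  set x : EuclideanSpace ℝ (Fin d) := (WithLp.equiv 2 (Fin d → ℝ)).symm v with hxdef
  have h1 : ‖Matrix.toEuclideanLin A x‖ ≤ specNorm A * ‖x‖ := by
    have h := (LinearMap.toContinuousLinearMap (Matrix.toEuclideanLin A)).le_opNorm x
    simpa only [specNorm, LinearMap.coe_toContinuousLinearMap'] using h
  have hx : ‖x‖^2 = ∑ i, (v i)^2 := by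
    rw [EuclideanSpace.norm_eq, Real.sq_sqrt (by positivity)]
    congr 1; ext i
    simp [hxdef, sq_abs]
  have hAx : ‖Matrix.toEuclideanLin A x‖^2 = ∑ i, (A.mulVec v i)^2 := by
    rw [EuclideanSpace.norm_eq, Real.sq_sqrt (by positivity)]
    congr 1; ext i
    rw [entry_toEuclideanLin]
    simp [sq_abs]
  calc ∑ i, (A.mulVec v i)^2 = ‖Matrix.toEuclideanLin A x‖^2 := hAx.symm
    _ ≤ (specNorm A * ‖x‖)^2 := by
        apply sq_le_sq' _ h1
        nlinarith [norm_nonneg (Matrix.toEuclideanLin A x)]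
    _ = specNorm A^2 * ∑ i, (v i)^2 := by rw [mul_pow, hx]

lemma specNorm_le_of_bound {A : Matrix (Fin d) (Fin d) ℝ} {c : ℝ} (hc : 0 ≤ c)
    (h : ∀ v : Fin d → ℝ, ∑ i, (A.mulVec v i)^2 ≤ c^2 * ∑ i, (v i)^2) :
    specNorm A ≤ c := by
  apply ContinuousLinearMap.opNorm_le_bound _ hc
  intro x
  have h2 : ‖(LinearMap.toContinuousLinearMap (Matrix.toEuclideanLin A)) x‖ ^ 2 ≤ (c * ‖x‖)^2 := by
    have hx : x = (WithLp.equiv 2 (Fin d → ℝ)).symm ((WithLp.equiv 2 (Fin d → ℝ)) x) := rfl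
    have hAx : ‖Matrix.toEuclideanLin A x‖^2 = ∑ i, (A.mulVec ((WithLp.equiv 2 (Fin d → ℝ)) x) i)^2 := by
      rw [EuclideanSpace.norm_eq, Real.sq_sqrt (by positivity)]
      congr 1; ext i
      conv_lhs => rw [hx]
      rw [entry_toEuclideanLin]
      simp [sq_abs]
    have hxn : ‖x‖^2 = ∑ i, (((WithLp.equiv 2 (Fin d → ℝ)) x) i)^2 := by
      rw [EuclideanSpace.norm_eq, Real.sq_sqrt (by positivity)]
      congr 1; ext i; simp [sq_abs]
    rw [LinearMap.coe_toContinuousLinearMap'] at *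
    rw [hAx, mul_pow, hxn]
    exact h _
  exact (pow_le_pow_iff_left₀ (norm_nonneg _) (by positivity) two_ne_zero).mp h2


lemma specNorm_nonneg (A : Matrix (Fin d) (Fin d) ℝ) : 0 ≤ specNorm A := norm_nonneg _

lemma specNorm_add_le (A B : Matrix (Fin d) (Fin d) ℝ) :
    specNorm (A + B) ≤ specNorm A + specNorm B := by
  unfold specNorm
  rw [map_add, map_add]
  exact norm_add_le _ _

lemma specNorm_smul (c : ℝ) (A : Matrix (Fin d) (Fin d) ℝ) :
    specNorm (c • A) = |c| * specNorm A := by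
  unfold specNorm
  rw [_root_.map_smul, _root_.map_smul]
  exact (norm_smul c (LinearMap.toContinuousLinearMap (Matrix.toEuclideanLin A))).trans
    (by rw [Real.norm_eq_abs])

lemma specNorm_one_le : specNorm (1 : Matrix (Fin d) (Fin d) ℝ) ≤ 1 := by
  unfold specNorm
  have h1 : Matrix.toEuclideanLin (1 : Matrix (Fin d) (Fin d) ℝ) = LinearMap.id := by
    apply LinearMap.ext; intro x; ext i
    simp [Matrix.toEuclideanLin_apply]
  rw [h1]
  exact ContinuousLinearMap.norm_id_le

-- quadratic form bound |vᵀ M v| ≤ specNorm M * ∑ v²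
lemma quadForm_abs_le (M : Matrix (Fin d) (Fin d) ℝ) (v : Fin d → ℝ) :
    |∑ j, v j * M.mulVec v j| ≤ specNorm M * ∑ j, (v j)^2 := by
  have hcs := Finset.sum_mul_sq_le_sq_mul_sq Finset.univ v (M.mulVec v)
  have h2 := mulVec_sq_sum_le M v
  have key : (∑ j, v j * M.mulVec v j)^2 ≤ (specNorm M * ∑ j, (v j)^2)^2 := by
    calc (∑ j, v j * M.mulVec v j)^2 ≤ (∑ j, (v j)^2) * (∑ j, (M.mulVec v j)^2) := hcs
      _ ≤ (∑ j, (v j)^2) * (specNorm M^2 * ∑ j, (v j)^2) := by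
          apply mul_le_mul_of_nonneg_left h2 (by positivity)
      _ = (specNorm M * ∑ j, (v j)^2)^2 := by ring
  have hy : 0 ≤ specNorm M * ∑ j, (v j)^2 := by
    have := specNorm_nonneg M; positivity
  calc |∑ j, v j * M.mulVec v j| = Real.sqrt ((∑ j, v j * M.mulVec v j)^2) := (Real.sqrt_sq_eq_abs _).symm
    _ ≤ Real.sqrt ((specNorm M * ∑ j, (v j)^2)^2) := Real.sqrt_le_sqrt key
    _ = specNorm M * ∑ j, (v j)^2 := Real.sqrt_sq hy




open Matrix

lemma dot_transpose (A : Matrix (Fin d) (Fin d) ℝ) (u v : Fin d → ℝ) :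
    ∑ i, v i * Aᵀ.mulVec u i = ∑ j, u j * A.mulVec v j := by
  simp only [Matrix.mulVec, dotProduct, Matrix.transpose_apply, Finset.mul_sum]
  rw [Finset.sum_comm]
  apply Finset.sum_congr rfl; intro j _
  apply Finset.sum_congr rfl; intro i _
  ring

lemma transpose_mulVec_sq_sum_le (A : Matrix (Fin d) (Fin d) ℝ) (u : Fin d → ℝ) :
    ∑ i, (Aᵀ.mulVec u i)^2 ≤ specNorm A^2 * ∑ i, (u i)^2 := by
  set w := Aᵀ.mulVec u with hw
  have h1 : ∑ i, (w i)^2 = ∑ j, u j * (A.mulVec w) j := by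
    rw [← dot_transpose A u w]
    apply Finset.sum_congr rfl; intro i _; rw [← hw]; ring
  have hcs := Finset.sum_mul_sq_le_sq_mul_sq Finset.univ u (A.mulVec w)
  have h2 := mulVec_sq_sum_le A w
  have hS : (0:ℝ) ≤ ∑ i, (w i)^2 := by positivity
  have hT : (0:ℝ) ≤ ∑ i, (u i)^2 := by positivity
  have hsn := specNorm_nonneg A
  have key : (∑ i, (w i)^2) * (∑ i, (w i)^2) ≤ (specNorm A^2 * ∑ i, (u i)^2) * (∑ i, (w i)^2) := by
    calc (∑ i, (w i)^2) * (∑ i, (w i)^2) = (∑ j, u j * (A.mulVec w) j)^2 := by rw [← h1]; ring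
      _ ≤ (∑ i, (u i)^2) * ∑ i, ((A.mulVec w) i)^2 := hcs
      _ ≤ (∑ i, (u i)^2) * (specNorm A^2 * ∑ i, (w i)^2) := by
          apply mul_le_mul_of_nonneg_left h2 hT
      _ = (specNorm A^2 * ∑ i, (u i)^2) * (∑ i, (w i)^2) := by ring
  rcases hS.eq_or_lt with h0 | h0
  · rw [← h0]; positivity
  · exact le_of_mul_le_mul_right key h0

lemma herm_of_symm {M : Matrix (Fin d) (Fin d) ℝ} (h : Mᵀ = M) : M.IsHermitian := by
  rw [Matrix.IsHermitian, Matrix.conjTranspose_eq_transpose_of_trivial, h]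

lemma posSemidef_smul_one_sub {D : Matrix (Fin d) (Fin d) ℝ} {s : ℝ} (hD : Dᵀ = D)
    (hs : specNorm D ≤ s) : (s • (1 : Matrix (Fin d) (Fin d) ℝ) - D).PosSemidef := by
  rw [Matrix.posSemidef_iff_dotProduct_mulVec]
  constructor
  · apply herm_of_symm
    rw [Matrix.transpose_sub, Matrix.transpose_smul, Matrix.transpose_one, hD]
  · intro x
    have hq := quadForm_abs_le D x
    have h1 : dotProduct (star x) ((s • (1 : Matrix (Fin d) (Fin d) ℝ) - D).mulVec x)
        = s * ∑ j, (x j)^2 - ∑ j, x j * D.mulVec x j := by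
      simp only [Matrix.sub_mulVec, Matrix.smul_mulVec, Matrix.one_mulVec, star_trivial,
        dotProduct, Pi.sub_apply, Pi.smul_apply, smul_eq_mul]
      rw [Finset.mul_sum, ← Finset.sum_sub_distrib]
      apply Finset.sum_congr rfl; intro i _; ring
    rw [h1]
    have habs := (abs_le.mp hq).2
    have hxx : (0:ℝ) ≤ ∑ j, (x j)^2 := by positivity
    have : ∑ j, x j * D.mulVec x j ≤ s * ∑ j, (x j)^2 := by
      calc ∑ j, x j * D.mulVec x j ≤ specNorm D * ∑ j, (x j)^2 := habs
        _ ≤ s * ∑ j, (x j)^2 := mul_le_mul_of_nonneg_right hs hxx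
    linarith

lemma posSemidef_smul_one_add {D : Matrix (Fin d) (Fin d) ℝ} {s : ℝ} (hD : Dᵀ = D)
    (hs : specNorm D ≤ s) : (s • (1 : Matrix (Fin d) (Fin d) ℝ) + D).PosSemidef := by
  have h1 : (-D)ᵀ = -D := by rw [Matrix.transpose_neg, hD]
  have h2 : specNorm (-D) ≤ s := by
    have hneg : (-D) = (-1:ℝ) • D := by rw [neg_smul, one_smul]
    rw [hneg, specNorm_smul]
    have h3 : |(-1:ℝ)| = 1 := by norm_num
    rw [h3, one_mul]; exact hs
  have h3 := posSemidef_smul_one_sub h1 h2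
  rwa [sub_neg_eq_add] at h3

lemma matSqrt_mul_self {M : Matrix (Fin d) (Fin d) ℝ} (h : M.PosSemidef) :
    matSqrt M * matSqrt M = M := by
  rw [matSqrt, dif_pos h]
  have hU : (star h.1.eigenvectorUnitary : Matrix (Fin d) (Fin d) ℝ) *
      (h.1.eigenvectorUnitary : Matrix (Fin d) (Fin d) ℝ) = 1 := Unitary.coe_star_mul_self _
  have e : ∀ (U D V : Matrix (Fin d) (Fin d) ℝ), U * D * V * (U * D * V) = U * (D * (V * U) * D) * V := by
    intro U D V; simp only [mul_assoc]
  rw [e, hU, mul_one, Matrix.diagonal_mul_diagonal]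
  conv_rhs => rw [h.1.spectral_theorem, Unitary.conjStarAlgAut_apply]
  congr 2; ext i j
  simp [Matrix.diagonal_apply, Real.mul_self_sqrt (h.eigenvalues_nonneg i)]

lemma matSqrt_transpose {M : Matrix (Fin d) (Fin d) ℝ} (h : M.PosSemidef) :
    (matSqrt M)ᵀ = matSqrt M := by
  rw [matSqrt, dif_pos h]
  rw [← Matrix.conjTranspose_eq_transpose_of_trivial]
  simp [Matrix.conjTranspose_mul, Matrix.star_eq_conjTranspose, Matrix.mul_assoc]


section Poly
open MvPolynomial
def linF (c : Fin d → ℝ) : MvPolynomial (Fin d) ℝ := ∑ j, MvPolynomial.C (c j) * MvPolynomial.X j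

def Qf (M : Matrix (Fin d) (Fin d) ℝ) : MvPolynomial (Fin d) ℝ :=
  ∑ j, ∑ k, MvPolynomial.C (M j k) * (MvPolynomial.X j * MvPolynomial.X k)

lemma linF_deg (c : Fin d → ℝ) : (linF c).totalDegree ≤ 1 := by
  apply (MvPolynomial.totalDegree_finset_sum _ _).trans
  apply Finset.sup_le; intro j _
  apply (MvPolynomial.totalDegree_mul _ _).trans
  simp [MvPolynomial.totalDegree_C, MvPolynomial.totalDegree_X]

lemma Qf_deg (M : Matrix (Fin d) (Fin d) ℝ) : (Qf M).totalDegree ≤ 2 := by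
  apply (MvPolynomial.totalDegree_finset_sum _ _).trans
  apply Finset.sup_le; intro j _
  apply (MvPolynomial.totalDegree_finset_sum _ _).trans
  apply Finset.sup_le; intro k _
  apply (MvPolynomial.totalDegree_mul _ _).trans
  have h := MvPolynomial.totalDegree_mul (MvPolynomial.X j : MvPolynomial (Fin d) ℝ) (MvPolynomial.X k)
  simp only [MvPolynomial.totalDegree_C, MvPolynomial.totalDegree_X] at *
  omega

lemma Qf_add (M N : Matrix (Fin d) (Fin d) ℝ) : Qf (M + N) = Qf M + Qf N := by
  unfold Qf
  rw [← Finset.sum_add_distrib]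
  apply Finset.sum_congr rfl; intro j _
  rw [← Finset.sum_add_distrib]
  apply Finset.sum_congr rfl; intro k _
  rw [Matrix.add_apply, map_add, add_mul]

lemma Qf_sub (M N : Matrix (Fin d) (Fin d) ℝ) : Qf (M - N) = Qf M - Qf N := by
  unfold Qf
  rw [← Finset.sum_sub_distrib]
  apply Finset.sum_congr rfl; intro j _
  rw [← Finset.sum_sub_distrib]
  apply Finset.sum_congr rfl; intro k _
  rw [Matrix.sub_apply, map_sub, sub_mul]

lemma Qf_smul (c : ℝ) (M : Matrix (Fin d) (Fin d) ℝ) : Qf (c • M) = MvPolynomial.C c * Qf M := by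
  unfold Qf
  rw [Finset.mul_sum]
  apply Finset.sum_congr rfl; intro j _
  rw [Finset.mul_sum]
  apply Finset.sum_congr rfl; intro k _
  rw [Matrix.smul_apply, smul_eq_mul, _root_.map_mul, mul_assoc]

lemma Qf_one : Qf (1 : Matrix (Fin d) (Fin d) ℝ) = ∑ i, MvPolynomial.X i ^ 2 := by
  unfold Qf
  apply Finset.sum_congr rfl; intro j _
  rw [Finset.sum_eq_single j]
  · simp [Matrix.one_apply, sq]
  · intro k _ hk
    simp [Matrix.one_apply, Ne.symm hk]
  · simp

lemma Qf_sos {M : Matrix (Fin d) (Fin d) ℝ} (h : M.PosSemidef) :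
    Qf M = ∑ i, (linF (fun j => matSqrt M i j))^2 := by
  have hsq : ∀ j k, M j k = ∑ i, matSqrt M i j * matSqrt M i k := by
    intro j k
    conv_lhs => rw [← matSqrt_mul_self h]
    rw [Matrix.mul_apply]
    apply Finset.sum_congr rfl; intro i _
    rw [← Matrix.transpose_apply (matSqrt M) i j, matSqrt_transpose h]
  have expand : ∀ i : Fin d, (linF fun j => matSqrt M i j)^2
      = ∑ j, ∑ k, MvPolynomial.C (matSqrt M i j * matSqrt M i k)
          * (MvPolynomial.X j * MvPolynomial.X k) := by
    intro i
    rw [linF, sq, Finset.sum_mul_sum]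
    apply Finset.sum_congr rfl; intro j _
    apply Finset.sum_congr rfl; intro k _
    rw [_root_.map_mul]; ring
  conv_rhs => rw [Finset.sum_congr rfl fun i _ => expand i]
  conv_rhs => rw [Finset.sum_comm]
  unfold Qf
  apply Finset.sum_congr rfl; intro j _
  rw [Finset.sum_comm]
  apply Finset.sum_congr rfl; intro k _
  rw [hsq j k, map_sum, Finset.sum_mul]

def subst (A : Matrix (Fin d) (Fin d) ℝ) : MvPolynomial (Fin d) ℝ →ₐ[ℝ] MvPolynomial (Fin d) ℝ :=
  MvPolynomial.aeval (fun i => linF (fun j => A j i))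

lemma subst_deg (A : Matrix (Fin d) (Fin d) ℝ) (p : MvPolynomial (Fin d) ℝ) :
    (subst A p).totalDegree ≤ p.totalDegree := by
  conv_lhs => rw [p.as_sum]
  rw [map_sum]
  apply (MvPolynomial.totalDegree_finset_sum _ _).trans
  apply Finset.sup_le; intro m hm
  rw [subst, MvPolynomial.aeval_monomial]
  apply (MvPolynomial.totalDegree_mul _ _).trans
  have h1 : (algebraMap ℝ (MvPolynomial (Fin d) ℝ) (MvPolynomial.coeff m p)).totalDegree = 0 := by
    rw [MvPolynomial.algebraMap_eq]; exact MvPolynomial.totalDegree_C _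
  rw [h1, zero_add]
  rw [Finsupp.prod]
  apply (MvPolynomial.totalDegree_finset_prod _ _).trans
  have h2 : ∀ i ∈ m.support, ((linF fun j => A j i) ^ (m i)).totalDegree ≤ m i := by
    intro i _
    apply (MvPolynomial.totalDegree_pow _ _).trans
    calc m i * (linF fun j => A j i).totalDegree ≤ m i * 1 :=
      Nat.mul_le_mul_left _ (linF_deg _)
    _ = m i := Nat.mul_one _
  calc ∑ i ∈ m.support, ((linF fun j => A j i) ^ (m i)).totalDegree
      ≤ ∑ i ∈ m.support, m i := Finset.sum_le_sum h2
    _ = m.sum fun _ e => e := rfl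
    _ ≤ p.totalDegree := MvPolynomial.le_totalDegree hm

lemma sum4_swap {M : Type*} [AddCommMonoid M] (f : Fin d → Fin d → Fin d → Fin d → M) :
    ∑ j, ∑ k, ∑ a, ∑ b, f j k a b = ∑ a, ∑ b, ∑ j, ∑ k, f j k a b := by
  have h1 : ∀ j : Fin d, ∑ k, ∑ a, ∑ b, f j k a b = ∑ a, ∑ b, ∑ k, f j k a b := by
    intro j
    rw [Finset.sum_comm]
    apply Finset.sum_congr rfl; intro a _
    rw [Finset.sum_comm]
  rw [Finset.sum_congr rfl fun j _ => h1 j, Finset.sum_comm]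
  apply Finset.sum_congr rfl; intro a _
  rw [Finset.sum_comm]

lemma subst_Qf (A M : Matrix (Fin d) (Fin d) ℝ) : subst A (Qf M) = Qf (A * M * Aᵀ) := by
  have lhs : subst A (Qf M) = ∑ j, ∑ k, ∑ a, ∑ b,
      MvPolynomial.C (M j k * (A a j * A b k)) * (MvPolynomial.X a * MvPolynomial.X b) := by
    unfold Qf
    rw [map_sum]
    apply Finset.sum_congr rfl; intro j _
    rw [map_sum]
    apply Finset.sum_congr rfl; intro k _
    rw [_root_.map_mul, _root_.map_mul]
    rw [show (subst A) (MvPolynomial.C (M j k)) = MvPolynomial.C (M j k) from by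
      rw [subst, MvPolynomial.aeval_C, MvPolynomial.algebraMap_eq]]
    rw [show (subst A) (MvPolynomial.X j) = linF (fun a => A a j) from by
      rw [subst, MvPolynomial.aeval_X]]
    rw [show (subst A) (MvPolynomial.X k) = linF (fun a => A a k) from by
      rw [subst, MvPolynomial.aeval_X]]
    rw [linF, linF, Finset.sum_mul_sum, Finset.mul_sum]
    apply Finset.sum_congr rfl; intro a _
    rw [Finset.mul_sum]
    apply Finset.sum_congr rfl; intro b _
    rw [_root_.map_mul, _root_.map_mul]
    ring
  have rhs : Qf (A * M * Aᵀ) = ∑ a, ∑ b, ∑ j, ∑ k,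
      MvPolynomial.C (M j k * (A a j * A b k)) * (MvPolynomial.X a * MvPolynomial.X b) := by
    unfold Qf
    apply Finset.sum_congr rfl; intro a _
    apply Finset.sum_congr rfl; intro b _
    have hentry : (A * M * Aᵀ) a b = ∑ j, ∑ k, M j k * (A a j * A b k) := by
      rw [Matrix.mul_apply]
      have : ∀ x, (A * M) a x * Aᵀ x b = ∑ y, A a y * M y x * A b x := by
        intro x
        rw [Matrix.mul_apply, Matrix.transpose_apply, Finset.sum_mul]
      rw [Finset.sum_congr rfl fun x _ => this x, Finset.sum_comm]
      apply Finset.sum_congr rfl; intro j _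
      apply Finset.sum_congr rfl; intro k _
      ring
    rw [hentry, map_sum, Finset.sum_mul]
    apply Finset.sum_congr rfl; intro j _
    rw [map_sum, Finset.sum_mul]
  rw [lhs, rhs, sum4_swap]

lemma subst_Qf_sq (A M : Matrix (Fin d) (Fin d) ℝ) :
    subst A ((Qf M) ^ 2) = (Qf (A * M * Aᵀ)) ^ 2 := by
  rw [map_pow, subst_Qf]

end Poly

section Lfacts
open MvPolynomial
variable {L : MvPolynomial (Fin d) ℝ →ₗ[ℝ] ℝ}

lemma L_Cmul (L : MvPolynomial (Fin d) ℝ →ₗ[ℝ] ℝ) (c : ℝ) (p : MvPolynomial (Fin d) ℝ) :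
    L (MvPolynomial.C c * p) = c * L p := by
  rw [← MvPolynomial.smul_eq_C_mul, L.map_smul, smul_eq_mul]

variable (hL2 : ∀ q : MvPolynomial (Fin d) ℝ, q.totalDegree ≤ 2 → 0 ≤ L (q ^ 2))

include hL2 in
lemma L_QfPSD_mul_sq {M : Matrix (Fin d) (Fin d) ℝ} (hM : M.PosSemidef)
    {q : MvPolynomial (Fin d) ℝ} (hq : q.totalDegree ≤ 1) : 0 ≤ L (Qf M * q ^ 2) := by
  rw [Qf_sos hM, Finset.sum_mul, map_sum]
  apply Finset.sum_nonneg; intro i _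
  have h : (linF (fun j => matSqrt M i j)) ^ 2 * q ^ 2 = ((linF (fun j => matSqrt M i j)) * q) ^ 2 := by
    ring
  rw [h]
  apply hL2
  apply (MvPolynomial.totalDegree_mul _ _).trans
  have := linF_deg (fun j => matSqrt M i j)
  omega

include hL2 in
lemma L_QfPSD_mul_QfPSD {M N : Matrix (Fin d) (Fin d) ℝ} (hM : M.PosSemidef)
    (hN : N.PosSemidef) : 0 ≤ L (Qf M * Qf N) := by
  rw [Qf_sos hM, Qf_sos hN, Finset.sum_mul_sum, map_sum]
  apply Finset.sum_nonneg; intro i _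
  rw [map_sum]
  apply Finset.sum_nonneg; intro j _
  have h : (linF (fun a => matSqrt M i a)) ^ 2 * (linF (fun a => matSqrt N j a)) ^ 2
      = ((linF (fun a => matSqrt M i a)) * (linF (fun a => matSqrt N j a))) ^ 2 := by ring
  rw [h]
  apply hL2
  apply (MvPolynomial.totalDegree_mul _ _).trans
  have := linF_deg (fun a => matSqrt M i a)
  have := linF_deg (fun a => matSqrt N j a)
  omega

include hL2 in
lemma L_cauchySchwarz {f g : MvPolynomial (Fin d) ℝ} (hf : f.totalDegree ≤ 2)
    (hg : g.totalDegree ≤ 2) : (L (f * g)) ^ 2 ≤ L (f ^ 2) * L (g ^ 2) := by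
  have key : ∀ t : ℝ, 0 ≤ L (f ^ 2) * (t * t) + (2 * L (f * g)) * t + L (g ^ 2) := by
    intro t
    have hdeg : (MvPolynomial.C t * f + g).totalDegree ≤ 2 := by
      apply (MvPolynomial.totalDegree_add _ _).trans
      apply max_le _ hg
      apply (MvPolynomial.totalDegree_mul _ _).trans
      simp only [MvPolynomial.totalDegree_C, zero_add]
      exact hf
    have h := hL2 _ hdeg
    have expand : (MvPolynomial.C t * f + g) ^ 2
        = MvPolynomial.C (t ^ 2) * f ^ 2 + MvPolynomial.C (2 * t) * (f * g) + g ^ 2 := by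
      have h1 : (MvPolynomial.C (t ^ 2) : MvPolynomial (Fin d) ℝ)
          = MvPolynomial.C t * MvPolynomial.C t := by
        rw [← _root_.map_mul]; ring_nf
      have h2 : (MvPolynomial.C (2 * t) : MvPolynomial (Fin d) ℝ)
          = 2 * MvPolynomial.C t := by
        rw [_root_.map_mul, map_ofNat]
      rw [h1, h2]; ring
    rw [expand, map_add, map_add, L_Cmul, L_Cmul] at h
    calc (0:ℝ) ≤ t ^ 2 * L (f ^ 2) + 2 * t * L (f * g) + L (g ^ 2) := h
      _ = L (f ^ 2) * (t * t) + (2 * L (f * g)) * t + L (g ^ 2) := by ring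
  have hd := discrim_le_zero key
  rw [discrim] at hd
  nlinarith [hd]

end Lfacts

section Glue
open MvPolynomial

lemma triple_mul_apply (A M : Matrix (Fin d) (Fin d) ℝ) (j k : Fin d) :
    (A * M * Aᵀ) j k = ∑ a, ∑ b, M a b * (A j a * A k b) := by
  rw [Matrix.mul_apply]
  have h : ∀ x, (A * M) j x * Aᵀ x k = ∑ y, A j y * M y x * A k x := by
    intro x
    rw [Matrix.mul_apply, Matrix.transpose_apply, Finset.sum_mul]
  rw [Finset.sum_congr rfl fun x _ => h x, Finset.sum_comm]
  apply Finset.sum_congr rfl; intro a _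
  apply Finset.sum_congr rfl; intro b _
  ring

def quadF (u : Fin d → ℝ) (B : Matrix (Fin d) (Fin d) ℝ) : ℝ := ∑ j, ∑ k, u j * B j k * u k

lemma inner1_mvec (u : Fin d → ℝ) (B : Matrix (Fin d) (Fin d) ℝ) :
    inner1 (fun p : Fin d × Fin d => u p.1 * u p.2) (mvec B) = quadF u B := by
  unfold inner1 mvec quadF
  conv_rhs => rw [← Finset.sum_product', Finset.univ_product_univ]
  apply Finset.sum_congr rfl; intro j _
  simp only []
  ring

lemma quadF_transform (A M : Matrix (Fin d) (Fin d) ℝ) (u : Fin d → ℝ) :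
    quadF u (A * M * Aᵀ) = quadF (Aᵀ.mulVec u) M := by
  unfold quadF
  have h1 : ∀ j k : Fin d, u j * (A * M * Aᵀ) j k * u k
      = ∑ a, ∑ b, u j * (M a b * (A j a * A k b)) * u k := by
    intro j k
    rw [triple_mul_apply, Finset.mul_sum, Finset.sum_mul]
    apply Finset.sum_congr rfl; intro a _
    rw [Finset.mul_sum, Finset.sum_mul]
  rw [Finset.sum_congr rfl fun j _ => Finset.sum_congr rfl fun k _ => h1 j k]
  rw [sum4_swap]
  apply Finset.sum_congr rfl; intro a _
  apply Finset.sum_congr rfl; intro b _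
  simp only [Matrix.mulVec, dotProduct, Matrix.transpose_apply]
  conv_rhs => rw [Finset.sum_mul, Finset.sum_mul]
  apply Finset.sum_congr rfl; intro j _
  rw [Finset.mul_sum]
  apply Finset.sum_congr rfl; intro k _
  ring

lemma outerM_transform (A : Matrix (Fin d) (Fin d) ℝ) (z : Fin d → ℝ) :
    A * (Matrix.of fun j k => z j * z k) * Aᵀ = Matrix.of fun j k => A.mulVec z j * A.mulVec z k := by
  ext j k
  rw [triple_mul_apply]
  simp only [Matrix.of_apply, Matrix.mulVec, dotProduct]
  rw [Finset.sum_mul_sum]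
  apply Finset.sum_congr rfl; intro a _
  apply Finset.sum_congr rfl; intro b _
  ring

lemma innerM_outer_eq (Λ : MvPolynomial (Fin d) ℝ →ₗ[ℝ] ℝ) (B : Matrix (Fin d) (Fin d) ℝ) :
    innerM (fun p q : Fin d × Fin d =>
        Λ (MvPolynomial.X p.1 * MvPolynomial.X p.2 * MvPolynomial.X q.1 * MvPolynomial.X q.2))
      (outer (mvec B) (mvec B)) = Λ ((Qf B) ^ 2) := by
  unfold innerM outer mvec
  have hQ : Qf B = ∑ p : Fin d × Fin d, MvPolynomial.C (B p.1 p.2) * (MvPolynomial.X p.1 * MvPolynomial.X p.2) := by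
    rw [Qf, ← Finset.sum_product', Finset.univ_product_univ]
  rw [hQ, sq, Finset.sum_mul_sum, map_sum]
  apply Finset.sum_congr rfl; intro p _
  rw [map_sum]
  apply Finset.sum_congr rfl; intro q _
  have h : (MvPolynomial.C (B p.1 p.2) * (MvPolynomial.X p.1 * MvPolynomial.X p.2)) *
      (MvPolynomial.C (B q.1 q.2) * (MvPolynomial.X q.1 * MvPolynomial.X q.2))
      = MvPolynomial.C (B p.1 p.2 * B q.1 q.2) *
        (MvPolynomial.X p.1 * MvPolynomial.X p.2 * MvPolynomial.X q.1 * MvPolynomial.X q.2) := by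
    rw [_root_.map_mul]; ring
  rw [h, L_Cmul]
  ring

lemma innerM_twoId_eq (Λ : MvPolynomial (Fin d) ℝ →ₗ[ℝ] ℝ) :
    innerM (fun p q : Fin d × Fin d =>
        Λ (MvPolynomial.X p.1 * MvPolynomial.X p.2 * MvPolynomial.X q.1 * MvPolynomial.X q.2))
      (twoId d) = 2 * Λ ((Qf (1 : Matrix (Fin d) (Fin d) ℝ)) ^ 2) := by
  unfold innerM twoId
  have h1 : ∀ p : Fin d × Fin d, ∑ q : Fin d × Fin d,
      Λ (MvPolynomial.X p.1 * MvPolynomial.X p.2 * MvPolynomial.X q.1 * MvPolynomial.X q.2) *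
        (if p = q then (2:ℝ) else 0)
      = 2 * Λ (MvPolynomial.X p.1 * MvPolynomial.X p.2 * MvPolynomial.X p.1 * MvPolynomial.X p.2) := by
    intro p
    rw [Finset.sum_eq_single p]
    · rw [if_pos rfl]; ring
    · intro q _ hq; rw [if_neg (Ne.symm hq), mul_zero]
    · simp
  rw [Finset.sum_congr rfl fun p _ => h1 p, ← Finset.mul_sum]
  congr 1
  rw [← map_sum]
  congr 1
  rw [Qf_one, sq, Finset.sum_mul_sum]
  conv_rhs => rw [← Finset.sum_product', Finset.univ_product_univ]
  apply Finset.sum_congr rfl; intro p _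
  ring

end Glue

set_option maxHeartbeats 2000000 in
/-- stability is preserved under linear transformations. -/
theorem stability_under_linear_transformation :
    ∃ CR Cr C C' : ℝ, 0 < CR ∧ 0 < Cr ∧ 0 < C ∧ 0 < C' ∧
      ∀ (d n : ℕ) (ε δ r R : ℝ) (ζ : Fin n → Fin d → ℝ)
        (A : Matrix (Fin d) (Fin d) ℝ),
        0 < ε → ε ≤ δ → 0 < R → R ≤ CR → 0 < r → r ≤ Cr →
        IsStable (fun i => fun p : Fin d × Fin d => ζ i p.1 * ζ i p.2)
          ε δ r (sphereSet d R) (pseudoSet d R) (idVec d) (twoId d) →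
        specNorm A ^ 2 ≤ R →
        IsStable
          (fun i => fun p : Fin d × Fin d =>
            (A.mulVec (ζ i)) p.1 * (A.mulVec (ζ i)) p.2)
          ε (C * (δ + Real.sqrt (ε * specNorm (A * Aᵀ - 1)))) C'
          (sphereSet d 1) (pseudoSet d 1) (mvec (A * Aᵀ)) (twoId d) := by
  refine ⟨1, 1, 3, 2, one_pos, one_pos, by norm_num, by norm_num, ?_⟩
  intro d n ε δ r R ζ A hε hεδ hR hR1 hr hr1 hSt hA
  intro v hv p hp M hM
  obtain ⟨u, hu, hveq⟩ := hv
  obtain ⟨L, hL1, hL2, hL3, hPdef⟩ := hp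
  set s := specNorm (A * Aᵀ - 1) with hs
  have hs0 : 0 ≤ s := specNorm_nonneg _
  have hδ0 : 0 < δ := lt_of_lt_of_le hε hεδ
  have hsqrt0 : 0 ≤ Real.sqrt (ε * s) := Real.sqrt_nonneg _
  have hA0 : 0 ≤ specNorm A := specNorm_nonneg A
  have hAAT_symm : (A * Aᵀ)ᵀ = A * Aᵀ := by rw [Matrix.transpose_mul, Matrix.transpose_transpose]
  have hATv : ∀ w : Fin d → ℝ, ∑ i, (Aᵀ.mulVec w i)^2 ≤ R * ∑ i, (w i)^2 := by
    intro w
    exact (transpose_mulVec_sq_sum_le A w).trans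
      (mul_le_mul_of_nonneg_right hA (by positivity))
  have hAAT_norm : specNorm (A * Aᵀ) ≤ R := by
    apply specNorm_le_of_bound hR.le
    intro w
    rw [← Matrix.mulVec_mulVec]
    calc ∑ i, (A.mulVec (Aᵀ.mulVec w) i)^2
        ≤ specNorm A^2 * ∑ i, (Aᵀ.mulVec w i)^2 := mulVec_sq_sum_le A _
      _ ≤ R * (R * ∑ i, (w i)^2) := by
          apply mul_le_mul hA (hATv w) (by positivity) hR.le
      _ = R^2 * ∑ i, (w i)^2 := by ring
  have hone : specNorm (1 : Matrix (Fin d) (Fin d) ℝ) ≤ 1 := specNorm_one_le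
  have hD_symm : (A * Aᵀ - 1)ᵀ = A * Aᵀ - 1 := by
    rw [Matrix.transpose_sub, hAAT_symm, Matrix.transpose_one]
  have hG_symm : (A * Aᵀ + 1)ᵀ = A * Aᵀ + 1 := by
    rw [Matrix.transpose_add, hAAT_symm, Matrix.transpose_one]
  have hsle : s ≤ 2 := by
    have hdecomp : A * Aᵀ - 1 = A * Aᵀ + (-1 : ℝ) • (1 : Matrix (Fin d) (Fin d) ℝ) := by
      rw [neg_smul, one_smul, sub_eq_add_neg]
    have h2 := specNorm_add_le (A * Aᵀ) ((-1 : ℝ) • (1 : Matrix (Fin d) (Fin d) ℝ))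
    rw [specNorm_smul] at h2
    have : s ≤ R + 1 := by
      rw [hs, hdecomp]
      refine h2.trans ?_
      have : |(-1 : ℝ)| = 1 := by norm_num
      rw [this, one_mul]
      linarith
    linarith
  have hGnorm : specNorm (A * Aᵀ + 1) ≤ s + 2 := by
    have hGd : A * Aᵀ + 1 = (A * Aᵀ - 1) + (2:ℝ) • (1 : Matrix (Fin d) (Fin d) ℝ) := by
      rw [two_smul]; abel
    rw [hGd]
    refine (specNorm_add_le _ _).trans ?_
    rw [specNorm_smul]
    have : |(2:ℝ)| = 2 := by norm_num
    rw [this]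
    linarith
  -- PSD matrices
  have hPSD_R : (R • (1 : Matrix (Fin d) (Fin d) ℝ) - A * Aᵀ).PosSemidef :=
    posSemidef_smul_one_sub hAAT_symm hAAT_norm
  have hPSD1 : (s • (1 : Matrix (Fin d) (Fin d) ℝ) - (A * Aᵀ - 1)).PosSemidef :=
    posSemidef_smul_one_sub hD_symm le_rfl
  have hPSD2 : (s • (1 : Matrix (Fin d) (Fin d) ℝ) + (A * Aᵀ - 1)).PosSemidef :=
    posSemidef_smul_one_add hD_symm le_rfl
  have hPSD3 : ((s+2) • (1 : Matrix (Fin d) (Fin d) ℝ) - (A * Aᵀ + 1)).PosSemidef :=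
    posSemidef_smul_one_sub hG_symm hGnorm
  have hPSD4 : ((s+2) • (1 : Matrix (Fin d) (Fin d) ℝ) + (A * Aᵀ + 1)).PosSemidef :=
    posSemidef_smul_one_add hG_symm hGnorm
  -- facts about L
  have hC1 : (MvPolynomial.C 1 : MvPolynomial (Fin d) ℝ) = 1 := map_one _
  have hLS1 : L (Qf (1 : Matrix (Fin d) (Fin d) ℝ)) ≤ 1 := by
    have h := hL3 1 (by simp)
    rw [one_pow, mul_one, map_sub, hC1, hL1] at h
    rw [Qf_one]
    linarith
  have hLS2 : 0 ≤ L ((Qf (1 : Matrix (Fin d) (Fin d) ℝ))^2) := hL2 _ (Qf_deg 1)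
  have hLS3 : L ((Qf (1 : Matrix (Fin d) (Fin d) ℝ))^2) ≤ 1 := by
    have hsum : 0 ≤ L ((MvPolynomial.C 1 - ∑ i, MvPolynomial.X i ^ 2) *
        (∑ i, (MvPolynomial.X i : MvPolynomial (Fin d) ℝ) ^ 2)) := by
      rw [Finset.mul_sum, map_sum]
      apply Finset.sum_nonneg; intro i _
      exact hL3 (MvPolynomial.X i) (le_of_eq (MvPolynomial.totalDegree_X i))
    have hexp : (MvPolynomial.C 1 - ∑ i, MvPolynomial.X i ^ 2) *
        (∑ i, (MvPolynomial.X i : MvPolynomial (Fin d) ℝ) ^ 2)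
        = (∑ i, (MvPolynomial.X i : MvPolynomial (Fin d) ℝ) ^ 2)
          - (∑ i, (MvPolynomial.X i : MvPolynomial (Fin d) ℝ) ^ 2)^2 := by
      rw [hC1]; ring
    rw [hexp, map_sub, ← Qf_one] at hsum
    rw [Qf_one] at hLS1 ⊢
    rw [Qf_one] at hsum
    linarith
  have hLD2 : L ((Qf (A * Aᵀ - 1))^2) ≤ s^2 := by
    have h0 := L_QfPSD_mul_QfPSD hL2 hPSD1 hPSD2
    have hCs : (MvPolynomial.C (s^2) : MvPolynomial (Fin d) ℝ)
        = MvPolynomial.C s * MvPolynomial.C s := by rw [← _root_.map_mul]; ring_nf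
    have hexp : Qf (s • (1 : Matrix (Fin d) (Fin d) ℝ) - (A * Aᵀ - 1)) *
        Qf (s • (1 : Matrix (Fin d) (Fin d) ℝ) + (A * Aᵀ - 1))
        = MvPolynomial.C (s^2) * (Qf (1 : Matrix (Fin d) (Fin d) ℝ))^2 - (Qf (A * Aᵀ - 1))^2 := by
      simp only [Qf_sub, Qf_add, Qf_smul, hCs]; ring
    rw [hexp, map_sub, L_Cmul] at h0
    nlinarith [hLS3, hLS2]
  have hLG2 : L ((Qf (A * Aᵀ + 1))^2) ≤ 16 := by
    have h0 := L_QfPSD_mul_QfPSD hL2 hPSD3 hPSD4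
    have hCs : (MvPolynomial.C ((s+2)^2) : MvPolynomial (Fin d) ℝ)
        = MvPolynomial.C (s+2) * MvPolynomial.C (s+2) := by rw [← _root_.map_mul]; ring_nf
    have hexp : Qf ((s+2) • (1 : Matrix (Fin d) (Fin d) ℝ) - (A * Aᵀ + 1)) *
        Qf ((s+2) • (1 : Matrix (Fin d) (Fin d) ℝ) + (A * Aᵀ + 1))
        = MvPolynomial.C ((s+2)^2) * (Qf (1 : Matrix (Fin d) (Fin d) ℝ))^2 - (Qf (A * Aᵀ + 1))^2 := by
      simp only [Qf_sub, Qf_add, Qf_smul, hCs]; ring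
    rw [hexp, map_sub, L_Cmul] at h0
    nlinarith [hLS3, hLS2]
  have hLG2nn : 0 ≤ L ((Qf (A * Aᵀ + 1))^2) := hL2 _ (Qf_deg _)
  have hLD2nn : 0 ≤ L ((Qf (A * Aᵀ - 1))^2) := hL2 _ (Qf_deg _)
  have habsLfg : |L (Qf (A * Aᵀ - 1) * Qf (A * Aᵀ + 1))| ≤ 4 * s := by
    have hCS : (L (Qf (A * Aᵀ - 1) * Qf (A * Aᵀ + 1)))^2 ≤ s^2 * 16 := by
      calc (L (Qf (A * Aᵀ - 1) * Qf (A * Aᵀ + 1)))^2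
          ≤ L ((Qf (A * Aᵀ - 1))^2) * L ((Qf (A * Aᵀ + 1))^2) :=
            L_cauchySchwarz hL2 (Qf_deg _) (Qf_deg _)
        _ ≤ s^2 * 16 := mul_le_mul hLD2 hLG2 hLG2nn (sq_nonneg s)
    calc |L (Qf (A * Aᵀ - 1) * Qf (A * Aᵀ + 1))|
        = Real.sqrt ((L (Qf (A * Aᵀ - 1) * Qf (A * Aᵀ + 1)))^2) := (Real.sqrt_sq_eq_abs _).symm
      _ ≤ Real.sqrt ((4*s)^2) := Real.sqrt_le_sqrt (by nlinarith [hCS])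
      _ = 4*s := Real.sqrt_sq (by positivity)
  -- the substituted functional
  set Lsub : MvPolynomial (Fin d) ℝ →ₗ[ℝ] ℝ := L.comp (subst A).toLinearMap with hLsub
  have hLsub_apply : ∀ q, Lsub q = L (subst A q) := by
    intro q; rw [hLsub]; simp
  have hP'mem : (fun p q : Fin d × Fin d => Lsub (MvPolynomial.X p.1 * MvPolynomial.X p.2 *
      MvPolynomial.X q.1 * MvPolynomial.X q.2)) ∈ pseudoSet d R := by
    refine ⟨Lsub, ?_, ?_, ?_, rfl⟩
    · show L (subst A 1) = 1
      rw [_root_.map_one, hL1]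
    · intro q hq
      show 0 ≤ L (subst A (q^2))
      have hpow : subst A (q^2) = (subst A q)^2 := map_pow (subst A) q 2
      rw [hpow]
      exact hL2 _ ((subst_deg A q).trans hq)
    · intro q hq
      show 0 ≤ L (subst A ((MvPolynomial.C R - ∑ i, MvPolynomial.X i ^ 2) * q^2))
      have hpow : subst A (q^2) = (subst A q)^2 := map_pow (subst A) q 2
      rw [_root_.map_mul, map_sub, hpow]
      have hCR : subst A (MvPolynomial.C R) = MvPolynomial.C R := by
        rw [subst, MvPolynomial.aeval_C, MvPolynomial.algebraMap_eq]
      have hSeq : subst A (∑ i, MvPolynomial.X i ^ 2 : MvPolynomial (Fin d) ℝ)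
          = Qf (A * Aᵀ) := by
        rw [← Qf_one, subst_Qf, Matrix.mul_one]
      rw [hCR, hSeq]
      have hq'deg : ((subst A) q).totalDegree ≤ 1 := (subst_deg A q).trans hq
      have hdecomp : (MvPolynomial.C R - Qf (A * Aᵀ)) * ((subst A) q)^2
          = MvPolynomial.C R * ((MvPolynomial.C 1 - ∑ i, MvPolynomial.X i ^ 2) * ((subst A) q)^2)
            + Qf (R • (1 : Matrix (Fin d) (Fin d) ℝ) - A * Aᵀ) * ((subst A) q)^2 := by
        simp only [Qf_sub, Qf_smul, Qf_one, hC1]; ring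
      rw [hdecomp, map_add, L_Cmul]
      have h1 := hL3 _ hq'deg
      have h2 := L_QfPSD_mul_sq hL2 hPSD_R hq'deg
      have := mul_nonneg hR.le h1
      linarith
  have hv'mem : (fun p : Fin d × Fin d => Aᵀ.mulVec u p.1 * Aᵀ.mulVec u p.2) ∈ sphereSet d R := by
    refine ⟨Aᵀ.mulVec u, ?_, rfl⟩
    calc ∑ i, (Aᵀ.mulVec u i)^2 ≤ R * ∑ i, (u i)^2 := hATv u
      _ ≤ R * 1 := mul_le_mul_of_nonneg_left hu hR.le
      _ = R := mul_one R
  obtain ⟨H1, H2, H3⟩ := hSt _ hv'mem _ hP'mem M hM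
  -- pointwise identifications
  have hbase : ∀ i : Fin n, (fun j : Fin d × Fin d => ζ i j.1 * ζ i j.2 - idVec d j)
      = mvec ((Matrix.of fun a b => ζ i a * ζ i b) - 1) := by
    intro i; funext j
    by_cases h : j.1 = j.2 <;> simp [mvec, idVec, Matrix.sub_apply, Matrix.one_apply, h]
  have hCmat : ∀ i : Fin n, A * ((Matrix.of fun a b => ζ i a * ζ i b) - 1) * Aᵀ
      = (Matrix.of fun a b => A.mulVec (ζ i) a * A.mulVec (ζ i) b) - A * Aᵀ := by
    intro i
    rw [Matrix.mul_sub, Matrix.sub_mul, Matrix.mul_one, outerM_transform]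
  have htrans : ∀ i : Fin n, (fun j : Fin d × Fin d =>
      A.mulVec (ζ i) j.1 * A.mulVec (ζ i) j.2 - mvec (A * Aᵀ) j)
      = mvec (A * ((Matrix.of fun a b => ζ i a * ζ i b) - 1) * Aᵀ) := by
    intro i; funext j
    rw [hCmat i]
    simp [mvec, Matrix.sub_apply]
  have harith1 : δ ≤ 3 * (δ + Real.sqrt (ε * s)) := by nlinarith
  have ht2 : (Real.sqrt (ε * s))^2 = ε * s := Real.sq_sqrt (mul_nonneg hε.le hs0)
  have harith2 : δ^2/ε + 8*s ≤ (3 * (δ + Real.sqrt (ε * s)))^2/ε := by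
    have h9 : δ^2 + 8*s*ε ≤ (3 * (δ + Real.sqrt (ε * s)))^2 := by
      nlinarith [mul_nonneg hδ0.le hsqrt0]
    calc δ^2/ε + 8*s = (δ^2 + 8*s*ε)/ε := by field_simp
      _ ≤ (3 * (δ + Real.sqrt (ε * s)))^2/ε := by
          gcongr
  refine ⟨?_, ?_, ?_⟩
  · -- condition 1
    have hsum1 : ∀ i ∈ M, inner1 v (fun j : Fin d × Fin d =>
        A.mulVec (ζ i) j.1 * A.mulVec (ζ i) j.2 - mvec (A * Aᵀ) j)
        = inner1 (fun p : Fin d × Fin d => Aᵀ.mulVec u p.1 * Aᵀ.mulVec u p.2)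
            (fun j : Fin d × Fin d => ζ i j.1 * ζ i j.2 - idVec d j) := by
      intro i _
      rw [hveq, htrans i, inner1_mvec, hbase i, inner1_mvec, quadF_transform]
    rw [Finset.sum_congr rfl hsum1]
    exact H1.trans harith1
  · -- condition 2
    have hsum2 : ∀ i ∈ M, innerM p (outer
          (fun j : Fin d × Fin d => A.mulVec (ζ i) j.1 * A.mulVec (ζ i) j.2 - mvec (A * Aᵀ) j)
          (fun j : Fin d × Fin d => A.mulVec (ζ i) j.1 * A.mulVec (ζ i) j.2 - mvec (A * Aᵀ) j))
        = innerM (fun p q : Fin d × Fin d => Lsub (MvPolynomial.X p.1 * MvPolynomial.X p.2 *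
            MvPolynomial.X q.1 * MvPolynomial.X q.2)) (outer
          (fun j : Fin d × Fin d => ζ i j.1 * ζ i j.2 - idVec d j)
          (fun j : Fin d × Fin d => ζ i j.1 * ζ i j.2 - idVec d j)) := by
      intro i _
      rw [hPdef, htrans i, innerM_outer_eq, hbase i, innerM_outer_eq]
      rw [hLsub_apply, subst_Qf_sq]
    have hP'two : innerM (fun p q : Fin d × Fin d => Lsub (MvPolynomial.X p.1 * MvPolynomial.X p.2 *
        MvPolynomial.X q.1 * MvPolynomial.X q.2)) (twoId d)
        = 2 * L ((Qf (A * Aᵀ))^2) := by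
      rw [innerM_twoId_eq, hLsub_apply, subst_Qf_sq, Matrix.mul_one]
    have hptwo : innerM p (twoId d) = 2 * L ((Qf (1 : Matrix (Fin d) (Fin d) ℝ))^2) := by
      rw [hPdef, innerM_twoId_eq]
    have hdiff : 2 * L ((Qf (A * Aᵀ))^2) - 2 * L ((Qf (1 : Matrix (Fin d) (Fin d) ℝ))^2)
        = 2 * L (Qf (A * Aᵀ - 1) * Qf (A * Aᵀ + 1)) := by
      have hq : (Qf (A * Aᵀ))^2 - (Qf (1 : Matrix (Fin d) (Fin d) ℝ))^2
          = Qf (A * Aᵀ - 1) * Qf (A * Aᵀ + 1) := by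
        simp only [Qf_sub, Qf_add]; ring
      rw [← hq, map_sub]; ring
    rw [Finset.sum_congr rfl hsum2, hptwo]
    rw [hP'two] at H2
    refine le_trans (abs_sub_le _ (2 * L ((Qf (A * Aᵀ))^2)) _) ?_
    have h2' : |2 * L ((Qf (A * Aᵀ))^2) - 2 * L ((Qf (1 : Matrix (Fin d) (Fin d) ℝ))^2)| ≤ 8 * s := by
      rw [hdiff]
      calc |2 * L (Qf (A * Aᵀ - 1) * Qf (A * Aᵀ + 1))|
          = 2 * |L (Qf (A * Aᵀ - 1) * Qf (A * Aᵀ + 1))| := by rw [abs_mul]; norm_num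
        _ ≤ 2 * (4 * s) := by linarith [habsLfg]
        _ = 8 * s := by ring
    exact le_trans (add_le_add H2 h2') harith2
  · -- condition 3
    rw [hPdef, innerM_twoId_eq]
    rw [abs_of_nonneg (by linarith)]
    norm_num
    linarith

end Paper
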